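/- For every real constant c > 0 and natural number N with N > c/e, the tail sum ∑_{n > N} (c/n)^n is bounded by (c/N)^N · 1/(1 + ln(N/c)). -/
import Mathlib


/-- Tail sum estimate: for `c > 0` and natural `N > c/e`,
`∑_{n > N} (c/n)^n ≤ (c/N)^N · 1/(1 + ln(N/c))`. -/
theorem tail_sum_bound (c : ℝ) (hc : 0 < c) (N : ℕ) (hN : (N : ℝ) > c / Real.exp 1) :
    ∑' j : ℕ, (c / ((N : ℝ) + 1 + j)) ^ (N + 1 + j) ≤
      (c / N) ^ N * (1 / (1 + Real.log (N / c))) := by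
  have hNpos : 0 < (N : ℝ) := lt_trans (div_pos hc (Real.exp_pos 1)) hN
  set L : ℝ := 1 + Real.log ((N : ℝ) / c) with hLdef
  have hL : 0 < L := by
    have e : Real.exp (-1) * Real.exp 1 = 1 := by rw [← Real.exp_add]; simp
    have hN' : c < (N : ℝ) * Real.exp 1 := by
      rw [gt_iff_lt, div_lt_iff₀ (Real.exp_pos 1)] at hN; exact hN
    have h1 : Real.exp (-1) < (N : ℝ) / c := by
      rw [lt_div_iff₀ hc]
      nlinarith [Real.exp_pos (-1), Real.exp_pos 1]
    have h2 : -1 < Real.log ((N : ℝ) / c) :=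
      (Real.lt_log_iff_exp_lt (div_pos hNpos hc)).mpr h1
    rw [hLdef]; linarith
  -- convexity-type inequality
  have claim : ∀ x : ℝ, (N : ℝ) ≤ x →
      x * Real.log (c / x) ≤ (N : ℝ) * Real.log (c / (N : ℝ)) - L * (x - N) := by
    intro x hx
    have hxpos : 0 < x := lt_of_lt_of_le hNpos hx
    have hlog : x - (N : ℝ) ≤ x * Real.log (x / N) := by
      have h := Real.log_le_sub_one_of_pos (div_pos hNpos hxpos)
      have h2 : Real.log ((N : ℝ) / x) = - Real.log (x / N) := by
        rw [← Real.log_inv]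
        congr 1
        field_simp
      rw [h2] at h
      have h3 : x * ((N : ℝ) / x) = N := by field_simp
      nlinarith
    rw [Real.log_div hc.ne' hxpos.ne', Real.log_div hc.ne' hNpos.ne']
    rw [Real.log_div hxpos.ne' hNpos.ne'] at hlog
    rw [hLdef, Real.log_div hNpos.ne' hc.ne']
    nlinarith
  set q : ℝ := Real.exp (-L) with hq
  have hq0 : 0 < q := Real.exp_pos _
  have hq1 : q < 1 := by
    rw [hq]
    exact Real.exp_lt_one_iff.mpr (by linarith)
  have hterm : ∀ j : ℕ, (c / ((N : ℝ) + 1 + j)) ^ (N + 1 + j) ≤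
      ((c / N) ^ N * q) * q ^ j := by
    intro j
    set x : ℝ := (N : ℝ) + 1 + j with hxdef
    have hxpos : 0 < x := by positivity
    have hxN : (N : ℝ) ≤ x := by
      have : (0:ℝ) ≤ (j:ℝ) := Nat.cast_nonneg j
      rw [hxdef]; linarith
    have hcast : ((N + 1 + j : ℕ) : ℝ) = x := by rw [hxdef]; push_cast; ring
    have e1 : (c / x) ^ (N + 1 + j) = Real.exp (((N + 1 + j : ℕ) : ℝ) * Real.log (c / x)) := by
      rw [Real.exp_nat_mul, Real.exp_log (div_pos hc hxpos)]
    have a1 : (c / (N : ℝ)) ^ N = Real.exp ((N : ℝ) * Real.log (c / N)) := by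
      rw [Real.exp_nat_mul, Real.exp_log (div_pos hc hNpos)]
    have a2 : q ^ j = Real.exp (-(L * j)) := by
      rw [hq, ← Real.exp_nat_mul]
      congr 1
      ring
    have hx1 : x - (N : ℝ) = 1 + j := by rw [hxdef]; ring
    have e2 : ((c / (N : ℝ)) ^ N * q) * q ^ j =
        Real.exp ((N : ℝ) * Real.log (c / N) - L * (x - N)) := by
      rw [a1, a2, hq, ← Real.exp_add, ← Real.exp_add, hx1]
      congr 1
      ring
    rw [e1, e2, hcast]
    exact Real.exp_le_exp.mpr (claim x hxN)
  have hsumR : Summable (fun j : ℕ => ((c / (N : ℝ)) ^ N * q) * q ^ j) :=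
    (summable_geometric_of_lt_one hq0.le hq1).mul_left _
  have hsumL : Summable (fun j : ℕ => (c / ((N : ℝ) + 1 + j)) ^ (N + 1 + j)) := by
    apply Summable.of_nonneg_of_le _ hterm hsumR
    intro j
    positivity
  have hle := Summable.tsum_le_tsum hterm hsumL hsumR
  refine le_trans hle ?_
  rw [tsum_mul_left, tsum_geometric_of_lt_one hq0.le hq1]
  have hCpos : (0:ℝ) ≤ (c / (N : ℝ)) ^ N := by positivity
  have eqn : q * Real.exp L = 1 := by rw [hq, ← Real.exp_add]; simp
  have hqL : q * (1 - q)⁻¹ ≤ 1 / L := by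
    rw [← div_eq_mul_inv, div_le_div_iff₀ (by linarith) hL]
    nlinarith [Real.add_one_le_exp L, hq0, eqn]
  calc (c / (N : ℝ)) ^ N * q * (1 - q)⁻¹
      = (c / (N : ℝ)) ^ N * (q * (1 - q)⁻¹) := by ring
    _ ≤ (c / (N : ℝ)) ^ N * (1 / L) := mul_le_mul_of_nonneg_left hqL hCpos
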